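/- The independence number of the symplectic graph Sp(2m, 𝔽₂) equals 2m + 1. -/

import Mathlib

open Finset

/-- The canonical symplectic form `σ(u,v) = uᵀ [[0, Iₘ], [-Iₘ, 0]] v` on `𝔽₂^{2m}`,
with vectors written as pairs in `(𝔽₂^m) × (𝔽₂^m)`. -/
def sympForm (m : ℕ) (u v : (Fin m → ZMod 2) × (Fin m → ZMod 2)) : ZMod 2 :=
  (∑ i, u.1 i * v.2 i) - ∑ i, u.2 i * v.1 i

/-- The symplectic graph `Sp(2m, 𝔽₂)`: vertices are the nonzero vectors of `𝔽₂^{2m}`,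
with distinct vertices adjacent iff the symplectic form vanishes on them. -/
def sympGraph (m : ℕ) :
    SimpleGraph {v : (Fin m → ZMod 2) × (Fin m → ZMod 2) // v ≠ 0} where
  Adj u v := u ≠ v ∧ sympForm m u.1 v.1 = 0
  symm := by
    constructor
    rintro u v ⟨h, hs⟩
    refine ⟨h.symm, ?_⟩
    have h1 : ∀ f g : Fin m → ZMod 2, ∑ i, f i * g i = ∑ i, g i * f i :=
      fun f g => Finset.sum_congr rfl fun i _ => mul_comm _ _
    unfold sympForm at hs ⊢
    rw [h1 v.1.1 u.1.2, h1 v.1.2 u.1.1]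
    linear_combination -hs
  loopless := ⟨fun u h => h.1 rfl⟩

/-- The independence number of a finite simple graph. -/
noncomputable def SimpleGraph.indepNum' {V : Type*} [Fintype V] (G : SimpleGraph V) : ℕ :=
  sSup {n | ∃ s : Finset V, ((s : Set V).Pairwise fun u v => ¬ G.Adj u v) ∧ s.card = n}

-- auxiliary lemmas

lemma sympForm_self (m : ℕ) (u : (Fin m → ZMod 2) × (Fin m → ZMod 2)) :
    sympForm m u u = 0 := by
  simp [sympForm, mul_comm]

lemma sympForm_zero_right (m : ℕ) (u : (Fin m → ZMod 2) × (Fin m → ZMod 2)) :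
    sympForm m u 0 = 0 := by
  simp [sympForm]

lemma sympForm_add_right (m : ℕ) (u a b : (Fin m → ZMod 2) × (Fin m → ZMod 2)) :
    sympForm m u (a + b) = sympForm m u a + sympForm m u b := by
  simp only [sympForm, Prod.fst_add, Prod.snd_add, Pi.add_apply, mul_add,
    Finset.sum_add_distrib]
  ring

lemma sympForm_sum_right (m : ℕ) (u : (Fin m → ZMod 2) × (Fin m → ZMod 2))
    (T : Finset ((Fin m → ZMod 2) × (Fin m → ZMod 2))) :
    sympForm m u (∑ e ∈ T, e) = ∑ e ∈ T, sympForm m u e := by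
  classical
  induction T using Finset.cons_induction with
  | empty => simp [sympForm_zero_right]
  | cons a s ha ih => rw [Finset.sum_cons, Finset.sum_cons, sympForm_add_right, ih]

lemma sum_diff_one {m : ℕ} (f g : Fin m → ZMod 2) (k : Fin m)
    (h : ∀ j, f j - g j = if j = k then 1 else 0) :
    (∑ j, f j) - ∑ j, g j = 1 := by
  rw [← Finset.sum_sub_distrib]
  simp only [h]
  simp

def sVec (m : ℕ) : Fin m ⊕ Fin m ⊕ Unit → (Fin m → ZMod 2) × (Fin m → ZMod 2)
  | .inl k => (fun j => if k ≤ j then 1 else 0, fun j => if k < j then 1 else 0)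
  | .inr (.inl k) => (fun j => if k < j then 1 else 0, fun j => if k ≤ j then 1 else 0)
  | .inr (.inr _) => (fun _ => 1, fun _ => 1)

lemma sympForm_sVec {m : ℕ} (i j : Fin m ⊕ Fin m ⊕ Unit) (h : i ≠ j) :
    sympForm m (sVec m i) (sVec m j) = 1 := by
  rcases i with k | k | u <;> rcases j with l | l | v <;>
    simp only [sVec, sympForm]
  · -- p k vs p l, k ≠ l
    have hkl : k ≠ l := fun e => h (by rw [e])
    rcases lt_or_gt_of_ne hkl with hlt | hlt
    · refine sum_diff_one _ _ l fun j => ?_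
      simp only [gt_iff_lt, Fin.lt_def] at hlt
      simp only [Fin.lt_def, Fin.le_def, Fin.ext_iff]
      split_ifs <;> first | decide | (exfalso; omega)
    · refine sum_diff_one _ _ k fun j => ?_
      simp only [gt_iff_lt, Fin.lt_def] at hlt
      simp only [Fin.lt_def, Fin.le_def, Fin.ext_iff]
      split_ifs <;> first | decide | (exfalso; omega)
  · -- p k vs q l
    rcases le_or_gt k l with hle | hlt
    · refine sum_diff_one _ _ l fun j => ?_
      rw [Fin.le_def] at hle
      simp only [Fin.lt_def, Fin.le_def, Fin.ext_iff]
      split_ifs <;> first | decide | (exfalso; omega)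
    · refine sum_diff_one _ _ k fun j => ?_
      simp only [gt_iff_lt, Fin.lt_def] at hlt
      simp only [Fin.lt_def, Fin.le_def, Fin.ext_iff]
      split_ifs <;> first | decide | (exfalso; omega)
  · -- p k vs w
    refine sum_diff_one _ _ k fun j => ?_
    simp only [Fin.lt_def, Fin.le_def, Fin.ext_iff]
    split_ifs <;> first | decide | (exfalso; omega)
  · -- q k vs p l
    rcases le_or_gt k l with hle | hlt
    · refine sum_diff_one _ _ l fun j => ?_
      rw [Fin.le_def] at hle
      simp only [Fin.lt_def, Fin.le_def, Fin.ext_iff]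
      split_ifs <;> first | decide | (exfalso; omega)
    · refine sum_diff_one _ _ k fun j => ?_
      simp only [gt_iff_lt, Fin.lt_def] at hlt
      simp only [Fin.lt_def, Fin.le_def, Fin.ext_iff]
      split_ifs <;> first | decide | (exfalso; omega)
  · -- q k vs q l, k ≠ l
    have hkl : k ≠ l := fun e => h (by rw [e])
    rcases lt_or_gt_of_ne hkl with hlt | hlt
    · refine sum_diff_one _ _ l fun j => ?_
      simp only [gt_iff_lt, Fin.lt_def] at hlt
      simp only [Fin.lt_def, Fin.le_def, Fin.ext_iff]
      split_ifs <;> first | decide | (exfalso; omega)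
    · refine sum_diff_one _ _ k fun j => ?_
      simp only [gt_iff_lt, Fin.lt_def] at hlt
      simp only [Fin.lt_def, Fin.le_def, Fin.ext_iff]
      split_ifs <;> first | decide | (exfalso; omega)
  · -- q k vs w
    refine sum_diff_one _ _ k fun j => ?_
    simp only [Fin.lt_def, Fin.le_def, Fin.ext_iff]
    split_ifs <;> first | decide | (exfalso; omega)
  · -- w vs p l
    refine sum_diff_one _ _ l fun j => ?_
    simp only [Fin.lt_def, Fin.le_def, Fin.ext_iff]
    split_ifs <;> first | decide | (exfalso; omega)
  · -- w vs q l
    refine sum_diff_one _ _ l fun j => ?_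
    simp only [Fin.lt_def, Fin.le_def, Fin.ext_iff]
    split_ifs <;> first | decide | (exfalso; omega)
  · exact absurd (congrArg (Sum.inr ∘ Sum.inr) (Subsingleton.elim u v)) h

lemma sVec_ne_zero {m : ℕ} (hm : 1 ≤ m) (i : Fin m ⊕ Fin m ⊕ Unit) :
    sVec m i ≠ 0 := by
  intro h0
  obtain ⟨j, hj⟩ : ∃ j : Fin m ⊕ Fin m ⊕ Unit, j ≠ i := by
    rcases i with k | k | u
    · exact ⟨.inr (.inr ()), by simp⟩
    · exact ⟨.inr (.inr ()), by simp⟩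
    · exact ⟨.inl ⟨0, hm⟩, by simp⟩
  have h1 := sympForm_sVec j i hj
  rw [h0, sympForm_zero_right] at h1
  exact absurd h1 (by decide)

lemma sVec_injective {m : ℕ} : Function.Injective (sVec m) := by
  intro i j hij
  by_contra h
  have h1 := sympForm_sVec i j h
  rw [hij, sympForm_self] at h1
  exact absurd h1 (by decide)

lemma indep_card_le {m : ℕ}
    (s : Finset {v : (Fin m → ZMod 2) × (Fin m → ZMod 2) // v ≠ 0})
    (hs : (s : Set _).Pairwise fun u v => ¬ (sympGraph m).Adj u v) :
    s.card ≤ 2 * m + 1 := by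
  classical
  by_contra hc
  push_neg at hc
  obtain ⟨u0, hu0⟩ : ∃ u, u ∈ s := Finset.card_pos.mp (by omega)
  set t : Finset ((Fin m → ZMod 2) × (Fin m → ZMod 2)) :=
    (s.erase u0).image Subtype.val with ht
  have hcard_t : t.card = s.card - 1 := by
    rw [ht, Finset.card_image_of_injective _ Subtype.val_injective,
      Finset.card_erase_of_mem hu0]
  have hfr : Module.finrank (ZMod 2) ((Fin m → ZMod 2) × (Fin m → ZMod 2)) = 2 * m := by
    simp [Module.finrank_prod]; ring
  have hlt : Module.finrank (ZMod 2) ((Fin m → ZMod 2) × (Fin m → ZMod 2)) < t.card := by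
    rw [hfr, hcard_t]; omega
  obtain ⟨f, hsum, x, hx, hfx⟩ := Module.exists_nontrivial_relation_of_finrank_lt_card hlt
  set T : Finset ((Fin m → ZMod 2) × (Fin m → ZMod 2)) :=
    t.filter (fun e => f e ≠ 0) with hT
  have hTsub : T ⊆ t := Finset.filter_subset _ _
  have hTsum : ∑ e ∈ T, e = 0 := by
    rw [← hsum]
    rw [Finset.sum_filter]
    refine (Finset.sum_congr rfl fun e _ => ?_).symm
    by_cases h : f e = 0
    · simp [h]
    · have h1 : f e = 1 := by revert h; generalize f e = c; revert c; decide
      simp [h, h1]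
  have hone : ∀ v : {x : (Fin m → ZMod 2) × (Fin m → ZMod 2) // x ≠ 0}, v ∈ s →
      ∀ e ∈ T, e ≠ v.val → sympForm m v.val e = 1 := by
    intro v hv e he hne
    obtain ⟨w, hw, rfl⟩ := Finset.mem_image.mp (hTsub he)
    have hws : w ∈ s := Finset.mem_of_mem_erase hw
    have hvw : v ≠ w := fun h => hne (by rw [h])
    have hadj := hs (Finset.mem_coe.mpr hv) (Finset.mem_coe.mpr hws) hvw
    simp only [sympGraph, ne_eq] at hadj
    have hz : ¬ sympForm m v.val w.val = 0 := fun hz =>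
      hs (Finset.mem_coe.mpr hv) (Finset.mem_coe.mpr hws) hvw
        (show v ≠ w ∧ sympForm m v.val w.val = 0 from ⟨hvw, hz⟩)
    revert hz; generalize sympForm m v.val w.val = c; revert c; decide
  have hu0T : ∀ e ∈ T, e ≠ u0.val := by
    intro e he heq
    obtain ⟨w, hw, hwv⟩ := Finset.mem_image.mp (hTsub he)
    have : w = u0 := Subtype.val_injective (hwv.trans heq)
    exact Finset.notMem_erase u0 s (this ▸ hw)
  have h1 : (T.card : ZMod 2) = 0 := by
    have hz := sympForm_sum_right m u0.val T
    rw [hTsum, sympForm_zero_right] at hz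
    have hone' : ∑ e ∈ T, sympForm m u0.val e = ∑ e ∈ T, (1 : ZMod 2) :=
      Finset.sum_congr rfl fun e he => hone u0 hu0 e he (hu0T e he)
    rw [hone'] at hz
    simpa using hz.symm
  obtain ⟨w0, hw0T⟩ : T.Nonempty := ⟨x, Finset.mem_filter.mpr ⟨hx, hfx⟩⟩
  obtain ⟨v1, hv1, rfl⟩ := Finset.mem_image.mp (hTsub hw0T)
  have hv1s : v1 ∈ s := Finset.mem_of_mem_erase hv1
  have h2 : (T.card : ZMod 2) = 1 := by
    have hz := sympForm_sum_right m v1.val T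
    rw [hTsum, sympForm_zero_right] at hz
    have hone' : ∑ e ∈ T, sympForm m v1.val e
        = ∑ e ∈ T, ((1 : ZMod 2) - if e = v1.val then 1 else 0) := by
      refine Finset.sum_congr rfl fun e he => ?_
      by_cases h : e = v1.val
      · simp [h, sympForm_self]
      · simp [h, hone v1 hv1s e he h]
    rw [hone', Finset.sum_sub_distrib, Finset.sum_ite_eq' T v1.val (fun _ => (1 : ZMod 2)),
      if_pos hw0T] at hz
    simp only [Finset.sum_const, nsmul_eq_mul, mul_one] at hz
    have : (T.card : ZMod 2) - 1 = 0 := hz.symm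
    linear_combination this
  rw [h1] at h2
  exact absurd h2 (by decide)

/-- The independence number of the symplectic graph `Sp(2m, 𝔽₂)` is `2m + 1`. -/
theorem indepNum_sympGraph (m : ℕ) (hm : 1 ≤ m) :
    (sympGraph m).indepNum' = 2 * m + 1 := by
  classical
  have hmem : (2 * m + 1) ∈ {n | ∃ s : Finset {v : (Fin m → ZMod 2) × (Fin m → ZMod 2) // v ≠ 0},
      ((s : Set _).Pairwise fun u v => ¬ (sympGraph m).Adj u v) ∧ s.card = n} := by
    refine ⟨Finset.univ.image fun i => (⟨sVec m i, sVec_ne_zero hm i⟩ :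
      {v : (Fin m → ZMod 2) × (Fin m → ZMod 2) // v ≠ 0}), ?_, ?_⟩
    · intro u hu v hv huv hadj
      simp only [Finset.coe_image, Set.mem_image, Finset.mem_coe, Finset.mem_univ] at hu hv
      obtain ⟨i, -, rfl⟩ := hu
      obtain ⟨j, -, rfl⟩ := hv
      have hij : i ≠ j := fun h => huv (by rw [h])
      have := sympForm_sVec i j hij
      have hadj' : _ ∧ sympForm m (sVec m i) (sVec m j) = 0 := hadj
      rw [hadj'.2] at this
      exact absurd this (by decide)
    · rw [Finset.card_image_of_injective _ (fun i j h => sVec_injective (by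
        simpa using congrArg Subtype.val h))]
      simp
      omega
  unfold SimpleGraph.indepNum'
  apply le_antisymm
  · exact csSup_le ⟨0, ∅, by simp, by simp⟩ (by rintro n ⟨s, hps, rfl⟩; exact indep_card_le s hps)
  · exact le_csSup ⟨2 * m + 1, by rintro n ⟨s, hps, rfl⟩; exact indep_card_le s hps⟩ hmem
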